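/- For every n : ℕ, one has in ℚ: ∑ t in Finset.range (2*n+1), ((2*n).choose (2*t) * catalan t : ℚ) = ∑ k in Finset.range (n+1), (∑ t in Finset.range (n+1), ((k+1 : ℚ)/(k+t+1)) * (n.choose (k+2*t)) * ((k+2*t).choose t))^2; i.e. the 2n-th Motzkin number equals the sum over k of the squares of the number of left cells with k through strands in the Motzkin monoid Mo_n. -/

import Mathlib

open Finset

noncomputable def f (k t : ℕ) : ℚ := ((k:ℚ)+1)/((k:ℚ)+(t:ℚ)+1) * (((k+2*t).choose t : ℕ) : ℚ)

lemma f_zero (k : ℕ) : f k 0 = 1 := by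
  unfold f
  simp only [Nat.mul_zero, Nat.add_zero, Nat.choose_zero_right, Nat.cast_one, Nat.cast_zero]
  rw [mul_one, div_eq_one_iff_eq] <;> push_cast <;> ring_nf
  positivity

lemma f_succ (k t : ℕ) : f k (t+1) = (((k+2*t+2).choose (t+1) : ℕ) : ℚ) - (((k+2*t+2).choose t : ℕ) : ℚ) := by
  have key : ((k+2*t+2).choose (t+1)) * (t+1) = ((k+2*t+2).choose t) * (k+t+2) := by
    rw [Nat.choose_succ_right_eq (k+2*t+2) t]
    congr 1
    omega
  unfold f
  have h2 : k + 2*(t+1) = k+2*t+2 := by ring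
  rw [h2]
  have hd : ((k:ℚ)+((t:ℚ)+1)+1) ≠ 0 := by positivity
  have hc := congrArg (Nat.cast : ℕ → ℚ) key
  push_cast at hc ⊢
  field_simp
  linear_combination -hc

lemma fA (k t : ℕ) : f (k+1) (t+1) = f k (t+1) + f (k+2) t := by
  cases t with
  | zero =>
    rw [f_succ, f_succ, f_zero]
    simp [Nat.choose_one_right]
    push_cast
    ring
  | succ s =>
    rw [f_succ, f_succ, f_succ]
    have p1 : (k+1+2*(s+1)+2) = (k+2*(s+1)+2) + 1 := by ring
    have p2 : (k+2+2*s+2) = k+2*(s+1)+2 := by ring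
    rw [p1, p2]
    have e1 : (k+2*(s+1)+2+1).choose (s+2) = (k+2*(s+1)+2).choose (s+1) + (k+2*(s+1)+2).choose (s+2) := Nat.choose_succ_succ _ _
    have e2 : (k+2*(s+1)+2+1).choose (s+1) = (k+2*(s+1)+2).choose s + (k+2*(s+1)+2).choose (s+1) := Nat.choose_succ_succ _ _
    rw [e1, e2]
    push_cast
    ring

lemma f0 (t : ℕ) : f 0 (t+1) = f 1 t := by
  cases t with
  | zero => rw [f_succ, f_zero]; norm_num
  | succ s =>
    rw [f_succ, f_succ]
    have p1 : 0+2*(s+1)+2 = 2*s+3+1 := by ring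
    have p2 : 1+2*s+2 = 2*s+3 := by ring
    rw [p1, p2]
    have e1 : (2*s+3+1).choose (s+1+1) = (2*s+3).choose (s+1) + (2*s+3).choose (s+2) := Nat.choose_succ_succ _ _
    have e2 : (2*s+3+1).choose (s+1) = (2*s+3).choose s + (2*s+3).choose (s+1) := Nat.choose_succ_succ _ _
    have e3 : (2*s+3).choose (s+2) = (2*s+3).choose (s+1) := Nat.choose_symm_of_eq_add (by omega)
    rw [e1, e2, e3]
    push_cast
    ring

noncomputable def B : ℕ → ℕ → ℚ
  | 0, 0 => 1
  | 0, _+1 => 0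
  | n+1, 0 => B n 0 + B n 1
  | n+1, k+1 => B n k + B n (k+1) + B n (k+2)

lemma B_eq_zero : ∀ n k, n < k → B n k = 0 := by
  intro n
  induction n with
  | zero => intro k hk; match k, hk with | k+1, _ => rfl
  | succ m ih =>
    intro k hk
    match k, hk with
    | k+1, hk =>
      show B m k + B m (k+1) + B m (k+2) = 0
      rw [ih k (by omega), ih (k+1) (by omega), ih (k+2) (by omega)]
      ring

noncomputable def Ls (n k : ℕ) : ℚ := ∑ t ∈ Finset.range (n+1), f k t * ((n.choose (k+2*t) : ℕ) : ℚ)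

lemma sum_ext (n k : ℕ) {M : ℕ} (h : n+1 ≤ M) :
    ∑ t ∈ Finset.range M, f k t * ((n.choose (k+2*t) : ℕ) : ℚ) = Ls n k := by
  unfold Ls
  symm
  apply Finset.sum_subset (Finset.range_subset_range.mpr h)
  intro t _ hts
  rw [Finset.mem_range, not_lt] at hts
  rw [Nat.choose_eq_zero_of_lt (by omega)]
  simp

lemma Ls_succ_succ (n k : ℕ) : Ls (n+1) (k+1) = Ls n k + Ls n (k+1) + Ls n (k+2) := by
  have step1 : Ls (n+1) (k+1) = (∑ t ∈ Finset.range (n+2), f (k+1) t * ((n.choose (k+2*t) : ℕ):ℚ)) + ∑ t ∈ Finset.range (n+2), f (k+1) t * ((n.choose (k+1+2*t) : ℕ):ℚ) := by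
    unfold Ls
    rw [← Finset.sum_add_distrib]
    apply Finset.sum_congr rfl
    intro t _
    have h1 : k+1+2*t = (k+2*t)+1 := by ring
    rw [h1, Nat.choose_succ_succ]
    push_cast; ring
  rw [step1, sum_ext n (k+1) (by omega)]
  have peel1 := Finset.sum_range_succ' (fun t => f (k+1) t * ((n.choose (k+2*t):ℕ):ℚ)) (n+1)
  have peel2 := Finset.sum_range_succ' (fun t => f k t * ((n.choose (k+2*t):ℕ):ℚ)) (n+1)
  have ext2 : ∑ t ∈ Finset.range (n+2), f k t * ((n.choose (k+2*t):ℕ):ℚ) = Ls n k := sum_ext n k (by omega)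
  beta_reduce at peel1 peel2
  rw [peel1]
  have e : ∀ s ∈ Finset.range (n+1), f (k+1) (s+1) * ((n.choose (k+2*(s+1)) : ℕ):ℚ)
      = f k (s+1) * ((n.choose (k+2*(s+1)):ℕ):ℚ) + f (k+2) s * ((n.choose ((k+2)+2*s):ℕ):ℚ) := by
    intro s _
    rw [fA]
    have h2 : (k+2)+2*s = k+2*(s+1) := by ring
    rw [h2]; ring
  rw [Finset.sum_congr rfl e, Finset.sum_add_distrib]
  have e2 : ∑ s ∈ Finset.range (n+1), f (k+2) s * ((n.choose ((k+2)+2*s):ℕ):ℚ) = Ls n (k+2) := rfl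
  rw [e2, ← ext2, peel2]
  simp only [f_zero]
  ring

lemma Ls_succ_zero (n : ℕ) : Ls (n+1) 0 = Ls n 0 + Ls n 1 := by
  have lhs : Ls (n+1) 0 = ∑ t ∈ Finset.range (n+2), f 0 t * (((n+1).choose (0+2*t):ℕ):ℚ) := (sum_ext (n+1) 0 (le_refl _)).symm
  have peel1 := Finset.sum_range_succ' (fun t => f 0 t * (((n+1).choose (0+2*t):ℕ):ℚ)) (n+1)
  have peel2 := Finset.sum_range_succ' (fun t => f 0 t * ((n.choose (0+2*t):ℕ):ℚ)) (n+1)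
  have ext2 : ∑ t ∈ Finset.range (n+2), f 0 t * ((n.choose (0+2*t):ℕ):ℚ) = Ls n 0 := sum_ext n 0 (by omega)
  beta_reduce at peel1 peel2
  rw [lhs, peel1]
  have e : ∀ s ∈ Finset.range (n+1), f 0 (s+1) * (((n+1).choose (0+2*(s+1)):ℕ):ℚ)
      = f 0 (s+1) * ((n.choose (0+2*(s+1)):ℕ):ℚ) + f 1 s * ((n.choose (1+2*s):ℕ):ℚ) := by
    intro s _
    have h2 : (n+1).choose (0+2*(s+1)) = n.choose (0+2*(s+1)) + n.choose (1+2*s) := by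
      have h1 : 0+2*(s+1) = (2*s+1)+1 := by ring
      have h3 : 1+2*s = 2*s+1 := by ring
      rw [h1, h3, Nat.choose_succ_succ]
      exact Nat.add_comm _ _
    rw [h2, ← f0]
    push_cast; ring
  rw [Finset.sum_congr rfl e, Finset.sum_add_distrib]
  have e2 : ∑ s ∈ Finset.range (n+1), f 1 s * ((n.choose (1+2*s):ℕ):ℚ) = Ls n 1 := rfl
  rw [e2, ← ext2, peel2]
  simp only [f_zero, Nat.mul_zero, Nat.add_zero, Nat.choose_zero_right, Nat.cast_one]
  ring

lemma Ls_eq_B : ∀ n k, Ls n k = B n k := by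
  intro n
  induction n with
  | zero =>
    intro k
    unfold Ls
    rw [Finset.sum_range_one, f_zero, one_mul]
    match k with
    | 0 => simp [B]
    | k+1 => rw [Nat.choose_eq_zero_of_lt (by omega)]; simp [B]
  | succ m ih =>
    intro k
    match k with
    | 0 => rw [Ls_succ_zero, ih, ih]; rfl
    | k+1 => rw [Ls_succ_succ, ih, ih, ih]; rfl

lemma B_succ_succ (n k : ℕ) : B (n+1) (k+1) = B n k + B n (k+1) + B n (k+2) := rfl
lemma B_succ_zero (n : ℕ) : B (n+1) 0 = B n 0 + B n 1 := rfl

lemma Bshift (a b : ℕ) :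
    ∑ k ∈ Finset.range (a+b+2), B (a+1) k * B b k
      = ∑ k ∈ Finset.range (a+b+2), B a k * B (b+1) k := by
  have hr : a+b+2 = (a+b+1)+1 := rfl
  rw [hr]
  rw [Finset.sum_range_succ' (fun k => B (a+1) k * B b k) (a+b+1),
      Finset.sum_range_succ' (fun k => B a k * B (b+1) k) (a+b+1)]
  simp only [B_succ_succ, B_succ_zero]
  have eL : ∀ k ∈ Finset.range (a+b+1), (B a k + B a (k+1) + B a (k+2)) * B b (k+1)
      = B a k * B b (k+1) + B a (k+1) * B b (k+1) + B a (k+2) * B b (k+1) := by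
    intro k _; ring
  have eR : ∀ k ∈ Finset.range (a+b+1), B a (k+1) * (B b k + B b (k+1) + B b (k+2))
      = B a (k+1) * B b k + B a (k+1) * B b (k+1) + B a (k+1) * B b (k+2) := by
    intro k _; ring
  rw [Finset.sum_congr rfl eL, Finset.sum_congr rfl eR,
      Finset.sum_add_distrib, Finset.sum_add_distrib,
      Finset.sum_add_distrib, Finset.sum_add_distrib]
  have h1 := Finset.sum_range_succ' (fun k => B a (k+1) * B b k) (a+b+1)
  have h1' := Finset.sum_range_succ (fun k => B a (k+1) * B b k) (a+b+1)
  have h2 := Finset.sum_range_succ' (fun k => B a k * B b (k+1)) (a+b+1)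
  have h2' := Finset.sum_range_succ (fun k => B a k * B b (k+1)) (a+b+1)
  beta_reduce at h1 h1' h2 h2'
  rw [h1'] at h1
  rw [h2'] at h2
  have z1 : B a (a+b+1+1) = 0 := B_eq_zero _ _ (by omega)
  have z2 : B b (a+b+1+1) = 0 := B_eq_zero _ _ (by omega)
  rw [z1] at h1
  rw [z2] at h2
  linarith [h1, h2]

lemma Bprod : ∀ b a, ∑ k ∈ Finset.range (a+b+1), B a k * B b k = B (a+b) 0 := by
  intro b
  induction b with
  | zero =>
    intro a
    rw [Finset.sum_range_succ']
    have z : ∀ k ∈ Finset.range a, B a (k+1) * B 0 (k+1) = 0 := by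
      intro k _
      show B a (k+1) * 0 = 0
      ring
    rw [Finset.sum_congr rfl z]
    simp [B]
  | succ c ih =>
    intro a
    rw [show a+(c+1)+1 = a+c+2 from by omega, ← Bshift a c,
        show a+c+2 = (a+1)+c+1 from by omega, ih (a+1),
        show a+1+c = a+(c+1) from by omega]

lemma f_catalan (t : ℕ) : f 0 t = (catalan t : ℚ) := by
  have key : (t+1) * catalan t = (2*t).choose t := by
    rw [succ_mul_catalan_eq_centralBinom, Nat.centralBinom_eq_two_mul_choose]
  have hc := congrArg (Nat.cast : ℕ → ℚ) key
  push_cast at hc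
  unfold f
  have hd : ((0:ℚ)+(t:ℚ)+1) ≠ 0 := by positivity
  rw [show 0+2*t = 2*t from by omega]
  field_simp
  linear_combination -hc

theorem motzkin_eq_sum_of_squares_of_cell_sizes (n : ℕ) :
    ∑ t ∈ Finset.range (2*n+1), ((2*n).choose (2*t) * catalan t : ℚ) =
      ∑ k ∈ Finset.range (n+1),
        (∑ t ∈ Finset.range (n+1),
          ((k+1 : ℚ)/((k : ℚ)+(t : ℚ)+1)) * (n.choose (k+2*t) : ℚ) *
            ((k+2*t).choose t : ℚ))^2 := by
  have L1 : ∑ t ∈ Finset.range (2*n+1), ((2*n).choose (2*t) * catalan t : ℚ) = B (2*n) 0 := by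
    rw [← Ls_eq_B]
    unfold Ls
    apply Finset.sum_congr rfl
    intro t _
    rw [show 0+2*t = 2*t from by omega, ← f_catalan]
    ring
  have L2 : ∀ k : ℕ, (∑ t ∈ Finset.range (n+1), ((k+1:ℚ)/((k:ℚ)+(t:ℚ)+1)) * ((n.choose (k+2*t)):ℚ) * (((k+2*t).choose t) : ℚ)) = B n k := by
    intro k
    rw [← Ls_eq_B]
    unfold Ls f
    apply Finset.sum_congr rfl
    intro t _
    push_cast
    ring
  have R1 : ∑ k ∈ Finset.range (n+1),
        (∑ t ∈ Finset.range (n+1),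
          ((k+1 : ℚ)/((k : ℚ)+(t : ℚ)+1)) * (n.choose (k+2*t) : ℚ) *
            ((k+2*t).choose t : ℚ))^2 = ∑ k ∈ Finset.range (n+1), B n k * B n k :=
    Finset.sum_congr rfl (fun k _ => by rw [L2 k]; ring)
  rw [L1, R1, show 2*n = n+n from by omega, ← Bprod n n]
  symm
  apply Finset.sum_subset (Finset.range_subset_range.mpr (by omega))
  intro k _ hk
  rw [Finset.mem_range, not_lt] at hk
  rw [B_eq_zero n k (by omega)]
  ring
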